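/- Let i₁, …, i_{2n} ∈ {1,2} and k₁, …, k_{2n} ∈ {1,…,2n}. If the multiset {k₁,…,k_{2n}} is not equal to {1,…,2n}, or if the number of indices j with i_j = 1 is odd (equivalently, the i's cannot be partitioned into n pairs of equal values), then E*(E_{i₁ k₁}, E_{i₂ k₂}, …, E_{i_{2n} k_{2n}}) = 0. -/

import Mathlib

/- STATEMENT 11: If the multiset of column indices {k₁,…,k_{2n}} is not {1,…,2n}, or the
number of row indices equal to 1 (0-indexed: 0) is odd, then
`E*(E_{i₁k₁}, …, E_{i_{2n}k_{2n}}) = 0`. -/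

/-- `Ω* k l (X, Y) = ∑_{i=1}^{2} (X_{ik} Y_{il} − X_{il} Y_{ik})`. -/
noncomputable def Omst (n : ℕ) (k l : Fin (2 * n)) (X Y : Fin 2 → Fin (2 * n) → ℝ) : ℝ :=
  ∑ i : Fin 2, (X i k * Y i l - X i l * Y i k)

/-- `E*(v₁,…,v_{2n}) = ∑_σ sgn σ (Ω*_{σ(1)σ(2)} ∧ ⋯ ∧ Ω*_{σ(2n−1)σ(2n)})(v₁,…,v_{2n})`. -/
noncomputable def Estar (n : ℕ) (v : Fin (2 * n) → (Fin 2 → Fin (2 * n) → ℝ)) : ℝ :=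
  ∑ σ : Equiv.Perm (Fin (2 * n)), ((Equiv.Perm.sign σ : ℤ) : ℝ) *
    ((1 / 2 ^ n : ℝ) * ∑ τ : Equiv.Perm (Fin (2 * n)), ((Equiv.Perm.sign τ : ℤ) : ℝ) *
      ∏ j : Fin n,
        Omst n (σ ⟨2 * j.1, by have := j.isLt; omega⟩) (σ ⟨2 * j.1 + 1, by have := j.isLt; omega⟩)
          (v (τ ⟨2 * j.1, by have := j.isLt; omega⟩)) (v (τ ⟨2 * j.1 + 1, by have := j.isLt; omega⟩)))


/-- standard basis matrix `E i k`. -/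
noncomputable def Emat (n : ℕ) (i : Fin 2) (k : Fin (2 * n)) : Fin 2 → Fin (2 * n) → ℝ :=
  fun a b => if a = i ∧ b = k then 1 else 0

lemma omst_eq {n : ℕ} (a b : Fin (2*n)) (i1 i2 : Fin 2) (k1 k2 : Fin (2*n)) :
    Omst n a b (Emat n i1 k1) (Emat n i2 k2) =
      if i1 = i2 then (if k1 = a ∧ k2 = b then (1:ℝ) else 0) - (if k1 = b ∧ k2 = a then 1 else 0)
      else 0 := by
  simp only [Omst, Emat, Fin.sum_univ_two]
  fin_cases i1 <;> fin_cases i2 <;> norm_num [Fin.ext_iff] <;> split_ifs <;>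
    first
      | omega
      | tauto

lemma omst_ne {n : ℕ} {a b : Fin (2*n)} {i1 i2 : Fin 2} {k1 k2 : Fin (2*n)}
    (h : Omst n a b (Emat n i1 k1) (Emat n i2 k2) ≠ 0) :
    i1 = i2 ∧ ((k1 = a ∧ k2 = b) ∨ (k1 = b ∧ k2 = a)) := by
  rw [omst_eq] at h
  by_cases hii : i1 = i2
  · refine ⟨hii, ?_⟩
    rw [if_pos hii] at h
    by_cases h1 : k1 = a ∧ k2 = b
    · exact Or.inl h1
    · right
      rw [if_neg h1] at h
      by_cases h2 : k1 = b ∧ k2 = a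
      · exact h2
      · rw [if_neg h2] at h; simp at h
  · rw [if_neg hii] at h; simp at h

/-- the pairing equivalence `Fin n × Fin 2 ≃ Fin (2n)`, `(m, b) ↦ 2m + b`. -/
def pairEquiv (n : ℕ) : Fin n × Fin 2 ≃ Fin (2 * n) where
  toFun p := ⟨2 * p.1.1 + p.2.1, by have := p.1.isLt; have := p.2.isLt; omega⟩
  invFun j := (⟨j.1 / 2, by have := j.isLt; omega⟩, ⟨j.1 % 2, by omega⟩)
  left_inv p := by
    ext <;> simp <;> omega
  right_inv j := by
    ext; simp; omega

theorem stmt_11 (n : ℕ) (hn : 1 ≤ n) (i : Fin (2 * n) → Fin 2) (k : Fin (2 * n) → Fin (2 * n))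
    (h : (Finset.univ : Finset (Fin (2 * n))).val.map k ≠ (Finset.univ : Finset (Fin (2 * n))).val ∨
      Odd ((Finset.univ : Finset (Fin (2 * n))).filter (fun j => i j = 0)).card) :
    Estar n (fun a => Emat n (i a) (k a)) = 0 := by
  have hz : ∀ σ τ : Equiv.Perm (Fin (2 * n)),
      (∏ j : Fin n,
        Omst n (σ ⟨2 * j.1, by have := j.isLt; omega⟩) (σ ⟨2 * j.1 + 1, by have := j.isLt; omega⟩)
          (Emat n (i (τ ⟨2 * j.1, by have := j.isLt; omega⟩)) (k (τ ⟨2 * j.1, by have := j.isLt; omega⟩)))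
          (Emat n (i (τ ⟨2 * j.1 + 1, by have := j.isLt; omega⟩)) (k (τ ⟨2 * j.1 + 1, by have := j.isLt; omega⟩)))) = 0 := by
    intro σ τ
    by_contra hP
    replace hP := Finset.prod_ne_zero_iff.mp hP
    have hpairs : ∀ j : Fin n,
        i (τ ⟨2 * j.1, by have := j.isLt; omega⟩) = i (τ ⟨2 * j.1 + 1, by have := j.isLt; omega⟩) ∧
        ((k (τ ⟨2 * j.1, by have := j.isLt; omega⟩) = σ ⟨2 * j.1, by have := j.isLt; omega⟩ ∧
          k (τ ⟨2 * j.1 + 1, by have := j.isLt; omega⟩) = σ ⟨2 * j.1 + 1, by have := j.isLt; omega⟩) ∨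
         (k (τ ⟨2 * j.1, by have := j.isLt; omega⟩) = σ ⟨2 * j.1 + 1, by have := j.isLt; omega⟩ ∧
          k (τ ⟨2 * j.1 + 1, by have := j.isLt; omega⟩) = σ ⟨2 * j.1, by have := j.isLt; omega⟩)) :=
      fun j => omst_ne (hP j (Finset.mem_univ j))
    rcases h with h1 | h2
    · -- k is surjective, hence the multiset map is univ
      apply h1
      have hsurj : Function.Surjective k := by
        intro c
        set m := σ.symm c with hm
        have hc : σ m = c := Equiv.apply_symm_apply σ c
        have hlt : m.1 < 2 * n := m.isLt
        have hdiv : m.1 / 2 < n := by omega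
        rcases Nat.even_or_odd m.1 with he | ho
        · have he' : m.1 % 2 = 0 := Nat.even_iff.mp he
          have hme : m = ⟨2 * ((⟨m.1 / 2, hdiv⟩ : Fin n)).1, by simp; omega⟩ := by
            ext; simp; omega
          rcases (hpairs ⟨m.1 / 2, hdiv⟩).2 with ⟨ha, _⟩ | ⟨_, hb⟩
          · exact ⟨_, by rw [ha, ← hc]; exact congrArg σ hme.symm⟩
          · exact ⟨_, by rw [hb, ← hc]; exact congrArg σ hme.symm⟩
        · have ho' : m.1 % 2 = 1 := Nat.odd_iff.mp ho
          have hme : m = ⟨2 * ((⟨m.1 / 2, hdiv⟩ : Fin n)).1 + 1, by simp; omega⟩ := by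
            ext; simp; omega
          rcases (hpairs ⟨m.1 / 2, hdiv⟩).2 with ⟨_, hb⟩ | ⟨ha, _⟩
          · exact ⟨_, by rw [hb, ← hc]; exact congrArg σ hme.symm⟩
          · exact ⟨_, by rw [ha, ← hc]; exact congrArg σ hme.symm⟩
      have hbij : Function.Bijective k :=
        (Finite.surjective_iff_bijective).mp hsurj
      set e : Fin (2*n) ≃ Fin (2*n) := Equiv.ofBijective k hbij with he
      have h5 : Finset.univ.map e.toEmbedding = Finset.univ := Finset.map_univ_equiv e
      have h6 := congrArg Finset.val h5
      rw [Finset.map_val] at h6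
      have h7 : ⇑e.toEmbedding = k := rfl
      rw [h7] at h6
      exact h6
    · -- parity contradiction
      rw [← Nat.not_even_iff_odd] at h2
      apply h2
      have hcount : ((Finset.univ : Finset (Fin (2 * n))).filter (fun j => i j = 0)).card =
          ∑ j : Fin (2*n), if i (τ j) = 0 then 1 else 0 := by
        rw [Finset.card_filter]
        exact (Equiv.sum_comp τ (fun j => if i j = 0 then 1 else 0)).symm
      rw [hcount, ← Equiv.sum_comp (pairEquiv n), Fintype.sum_prod_type]
      apply Finset.even_sum
      intro m _
      rw [Fin.sum_univ_two]
      have hp0 : pairEquiv n (m, 0) = ⟨2 * m.1, by have := m.isLt; omega⟩ := rfl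
      have hp1 : pairEquiv n (m, 1) = ⟨2 * m.1 + 1, by have := m.isLt; omega⟩ := rfl
      rw [hp0, hp1, (hpairs m).1]
      split_ifs <;> simp
  rw [Estar]
  apply Finset.sum_eq_zero
  intro σ _
  have : (∑ τ : Equiv.Perm (Fin (2 * n)), ((Equiv.Perm.sign τ : ℤ) : ℝ) *
      ∏ j : Fin n,
        Omst n (σ ⟨2 * j.1, by have := j.isLt; omega⟩) (σ ⟨2 * j.1 + 1, by have := j.isLt; omega⟩)
          (Emat n (i (τ ⟨2 * j.1, by have := j.isLt; omega⟩)) (k (τ ⟨2 * j.1, by have := j.isLt; omega⟩)))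
          (Emat n (i (τ ⟨2 * j.1 + 1, by have := j.isLt; omega⟩)) (k (τ ⟨2 * j.1 + 1, by have := j.isLt; omega⟩)))) = 0 :=
    Finset.sum_eq_zero fun τ _ => by rw [hz σ τ, mul_zero]
  rw [this, mul_zero, mul_zero]
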